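/- Ecumenical consequence is intrinsically intuitionistic: for every finite multiset Γ of Ecumenical formulas and formula B, the sequent Γ ⇒ B is provable in LEci if and only if the formula (∧Γ) →_i B is provable in LEci (where ∧Γ is the conjunction of the formulas in Γ). -/

import Mathlib

/-! Ecumenical first-order language and the sequent calculus LEci. -/

/-- Ecumenical first-order formulas. Predicates are applied to lists of variables
(variables are natural numbers). `iatom`/`catom` are intuitionistic/classical
predicate letters; `conj`, `neg`, `all`, `bot` are the neutral connectives; the
`i`/`c` prefixes mark intuitionistic/classical implication, disjunction and
existential quantification. -/
inductive Formula : Type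
  | bot : Formula
  | iatom (p : ℕ) (args : List ℕ) : Formula
  | catom (p : ℕ) (args : List ℕ) : Formula
  | neg (A : Formula) : Formula
  | conj (A B : Formula) : Formula
  | iimp (A B : Formula) : Formula
  | cimp (A B : Formula) : Formula
  | ivee (A B : Formula) : Formula
  | cvee (A B : Formula) : Formula
  | all (x : ℕ) (A : Formula) : Formula
  | iex (x : ℕ) (A : Formula) : Formula
  | cex (x : ℕ) (A : Formula) : Formula
  deriving DecidableEq

namespace Formula

/-- Free variables of a formula. -/
def fv : Formula → Finset ℕ
  | bot => ∅
  | iatom _ args => args.toFinset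
  | catom _ args => args.toFinset
  | neg A => A.fv
  | conj A B => A.fv ∪ B.fv
  | iimp A B => A.fv ∪ B.fv
  | cimp A B => A.fv ∪ B.fv
  | ivee A B => A.fv ∪ B.fv
  | cvee A B => A.fv ∪ B.fv
  | all x A => A.fv.erase x
  | iex x A => A.fv.erase x
  | cex x A => A.fv.erase x

/-- `A.subst y x` is `A[y/x]`: the substitution of the variable `y` for the
free occurrences of the variable `x`. -/
def subst (y x : ℕ) : Formula → Formula
  | bot => bot
  | iatom p args => iatom p (args.map fun z => if z = x then y else z)
  | catom p args => catom p (args.map fun z => if z = x then y else z)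
  | neg A => neg (A.subst y x)
  | conj A B => conj (A.subst y x) (B.subst y x)
  | iimp A B => iimp (A.subst y x) (B.subst y x)
  | cimp A B => cimp (A.subst y x) (B.subst y x)
  | ivee A B => ivee (A.subst y x) (B.subst y x)
  | cvee A B => cvee (A.subst y x) (B.subst y x)
  | all z A => if z = x then all z A else all z (A.subst y x)
  | iex z A => if z = x then iex z A else iex z (A.subst y x)
  | cex z A => if z = x then cex z A else cex z (A.subst y x)

end Formula

/-- the variable `y` does not occur free in any formula of `Γ`. -/
def FreshIn (y : ℕ) (Γ : Multiset Formula) : Prop := ∀ A ∈ Γ, y ∉ A.fv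

/-- The Ecumenical sequent calculus LEci.  `LEci Γ C` means that the
single-succedent sequent `Γ ⇒ C` is provable.  Antecedents are multisets. -/
inductive LEci : Multiset Formula → Formula → Prop
  | init (A : Formula) (Γ : Multiset Formula) : LEci (A ::ₘ Γ) A
  | weak {Γ : Multiset Formula} (A : Formula) : LEci Γ .bot → LEci Γ A
  | botL (Γ : Multiset Formula) (A : Formula) : LEci (.bot ::ₘ Γ) A
  | andL {Γ A B C} : LEci (A ::ₘ B ::ₘ Γ) C → LEci (.conj A B ::ₘ Γ) C
  | andR {Γ A B} : LEci Γ A → LEci Γ B → LEci Γ (.conj A B)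
  | iveeL {Γ A B C} : LEci (A ::ₘ Γ) C → LEci (B ::ₘ Γ) C →
      LEci (.ivee A B ::ₘ Γ) C
  | iveeR1 {Γ A B} : LEci Γ A → LEci Γ (.ivee A B)
  | iveeR2 {Γ A B} : LEci Γ B → LEci Γ (.ivee A B)
  | cveeL {Γ A B} : LEci (A ::ₘ Γ) .bot → LEci (B ::ₘ Γ) .bot →
      LEci (.cvee A B ::ₘ Γ) .bot
  | cveeR {Γ A B} : LEci (.neg A ::ₘ .neg B ::ₘ Γ) .bot → LEci Γ (.cvee A B)
  | iimpL {Γ A B C} : LEci (.iimp A B ::ₘ Γ) A → LEci (B ::ₘ Γ) C →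
      LEci (.iimp A B ::ₘ Γ) C
  | iimpR {Γ A B} : LEci (A ::ₘ Γ) B → LEci Γ (.iimp A B)
  | cimpL {Γ A B} : LEci (.cimp A B ::ₘ Γ) A → LEci (B ::ₘ Γ) .bot →
      LEci (.cimp A B ::ₘ Γ) .bot
  | cimpR {Γ A B} : LEci (A ::ₘ .neg B ::ₘ Γ) .bot → LEci Γ (.cimp A B)
  | negL {Γ A} : LEci (.neg A ::ₘ Γ) A → LEci (.neg A ::ₘ Γ) .bot
  | negR {Γ A} : LEci (A ::ₘ Γ) .bot → LEci Γ (.neg A)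
  | Lc {Γ p args} : LEci (.iatom p args ::ₘ Γ) .bot →
      LEci (.catom p args ::ₘ Γ) .bot
  | Rc {Γ p args} : LEci (.neg (.iatom p args) ::ₘ Γ) .bot →
      LEci Γ (.catom p args)
  | allL {Γ A C x} (y : ℕ) : LEci (A.subst y x ::ₘ .all x A ::ₘ Γ) C →
      LEci (.all x A ::ₘ Γ) C
  | allR {Γ A x} (y : ℕ)
      (hfresh : FreshIn y Γ ∧ y ∉ (Formula.all x A).fv) :
      LEci Γ (A.subst y x) → LEci Γ (.all x A)
  | iexL {Γ A C x} (y : ℕ)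
      (hfresh : FreshIn y Γ ∧ y ∉ (Formula.iex x A).fv ∧ y ∉ C.fv) :
      LEci (A.subst y x ::ₘ Γ) C → LEci (.iex x A ::ₘ Γ) C
  | iexR {Γ A x} (y : ℕ) : LEci Γ (A.subst y x) → LEci Γ (.iex x A)
  | cexL {Γ A x} (y : ℕ)
      (hfresh : FreshIn y Γ ∧ y ∉ (Formula.cex x A).fv) :
      LEci (A.subst y x ::ₘ Γ) .bot → LEci (.cex x A ::ₘ Γ) .bot
  | cexR {Γ A x} : LEci (.all x (.neg A) ::ₘ Γ) .bot → LEci Γ (.cex x A)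

/-- `⊢_LEci A` : the sequent `⇒ A` is provable in LEci. -/
def Provable (A : Formula) : Prop := LEci 0 A

/-- Ecumenical (intuitionistic) bi-implication `A ↔ᵢ B := (A →ᵢ B) ∧ (B →ᵢ A)`. -/
def iffi (A B : Formula) : Formula := .conj (.iimp A B) (.iimp B A)

/-- The conjunction `∧Γ` of a finite list of formulas (the empty conjunction is
the unit `¬⊥`). -/
def conjList : List Formula → Formula
  | [] => .neg .bot
  | [A] => A
  | A :: Γ => .conj A (conjList Γ)

namespace LEciAux

open Multiset

lemma cast {Γ Γ' : Multiset Formula} (h : Γ = Γ') {B : Formula} (d : LEci Γ B) :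
    LEci Γ' B := h ▸ d

lemma swap12 (a b : Formula) (s : Multiset Formula) :
    a ::ₘ b ::ₘ s = b ::ₘ a ::ₘ s := Multiset.cons_swap a b s

lemma rot3 (a b c : Formula) (s : Multiset Formula) :
    a ::ₘ b ::ₘ c ::ₘ s = b ::ₘ c ::ₘ a ::ₘ s := by
  rw [Multiset.cons_swap a b, Multiset.cons_swap a c]

/-- Admissible weakening by the closed formula `¬⊥`. -/
lemma weakNB {Γ : Multiset Formula} {B : Formula} (h : LEci Γ B) :
    LEci (.neg .bot ::ₘ Γ) B := by
  set nb : Formula := .neg .bot with hnb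
  induction h with
  | init A Γ => exact cast (swap12 ..) (.init A (nb ::ₘ Γ))
  | weak A _ ih => exact .weak A ih
  | botL Γ A => exact cast (swap12 ..) (.botL _ A)
  | andL _ ih => exact cast (swap12 ..) (.andL (cast (rot3 ..) ih))
  | andR _ _ ih1 ih2 => exact .andR ih1 ih2
  | iveeL _ _ ih1 ih2 =>
      exact cast (swap12 ..) (.iveeL (cast (swap12 ..) ih1) (cast (swap12 ..) ih2))
  | iveeR1 _ ih => exact .iveeR1 ih
  | iveeR2 _ ih => exact .iveeR2 ih
  | cveeL _ _ ih1 ih2 =>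
      exact cast (swap12 ..) (.cveeL (cast (swap12 ..) ih1) (cast (swap12 ..) ih2))
  | cveeR _ ih => exact .cveeR (cast (rot3 ..) ih)
  | iimpL _ _ ih1 ih2 =>
      exact cast (swap12 ..) (.iimpL (cast (swap12 ..) ih1) (cast (swap12 ..) ih2))
  | iimpR _ ih => exact .iimpR (cast (swap12 ..) ih)
  | cimpL _ _ ih1 ih2 =>
      exact cast (swap12 ..) (.cimpL (cast (swap12 ..) ih1) (cast (swap12 ..) ih2))
  | cimpR _ ih => exact .cimpR (cast (rot3 ..) ih)
  | negL _ ih => exact cast (swap12 ..) (.negL (cast (swap12 ..) ih))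
  | negR _ ih => exact .negR (cast (swap12 ..) ih)
  | Lc _ ih => exact cast (swap12 ..) (.Lc (cast (swap12 ..) ih))
  | Rc _ ih => exact .Rc (cast (swap12 ..) ih)
  | allL y _ ih => exact cast (swap12 ..) (.allL y (cast (rot3 ..) ih))
  | allR y hfresh _ ih =>
      refine .allR y ⟨?_, hfresh.2⟩ ih
      intro A hA
      rcases Multiset.mem_cons.mp hA with rfl | hA
      · simp [hnb, Formula.fv]
      · exact hfresh.1 A hA
  | iexL y hfresh _ ih =>
      refine cast (swap12 ..) (.iexL y ⟨?_, hfresh.2⟩ (cast (swap12 ..) ih))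
      intro A hA
      rcases Multiset.mem_cons.mp hA with rfl | hA
      · simp [hnb, Formula.fv]
      · exact hfresh.1 A hA
  | iexR y _ ih => exact .iexR y ih
  | cexL y hfresh _ ih =>
      refine cast (swap12 ..) (.cexL y ⟨?_, hfresh.2⟩ (cast (swap12 ..) ih))
      intro A hA
      rcases Multiset.mem_cons.mp hA with rfl | hA
      · simp [hnb, Formula.fv]
      · exact hfresh.1 A hA
  | cexR _ ih => exact .cexR (cast (swap12 ..) ih)

end LEciAux

namespace LEciAux

lemma pair_add (a b : Formula) (s : Multiset Formula) :
    ({a, b} : Multiset Formula) + s = a ::ₘ b ::ₘ s := by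
  rw [Multiset.insert_eq_cons, Multiset.cons_add, Multiset.singleton_add]

def GoodRepl (E : Formula) (rE : Multiset Formula) : Prop :=
  (∃ A C, E = .conj A C ∧ rE = {A, C}) ∨ (E = .neg .bot ∧ rE = 0)

lemma freshRepl {E rE} (hE : GoodRepl E rE) {y : ℕ} {Δ : Multiset Formula}
    (h : FreshIn y (E ::ₘ Δ)) : FreshIn y (rE + Δ) := by
  intro F hF
  rcases Multiset.mem_add.mp hF with hF | hF
  · have hEy : y ∉ E.fv := h E (Multiset.mem_cons_self ..)
    rcases hE with ⟨A, C, rfl, rfl⟩ | ⟨rfl, rfl⟩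
    · simp only [Formula.fv, Finset.mem_union, not_or] at hEy
      rcases (by simpa using hF : F = A ∨ F = C) with rfl | rfl
      · exact hEy.1
      · exact hEy.2
    · simp at hF
  · exact h F (Multiset.mem_cons_of_mem hF)

lemma initRepl {E rE} (hE : GoodRepl E rE) (Δ : Multiset Formula) :
    LEci (rE + Δ) E := by
  rcases hE with ⟨A, C, rfl, rfl⟩ | ⟨rfl, rfl⟩
  · exact cast (pair_add ..).symm
      (.andR (.init A _) (cast (swap12 C A Δ) (.init C _)))
  · exact cast (zero_add Δ).symm (.negR (.botL Δ .bot))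

lemma inv {E rE} (hE : GoodRepl E rE) {Γ : Multiset Formula} {B : Formula}
    (h : LEci Γ B) : ∀ Δ, Γ = E ::ₘ Δ → LEci (rE + Δ) B := by
  induction h with
  | init A Γ =>
      intro Δ heq
      rcases Multiset.cons_eq_cons.mp heq with ⟨rfl, rfl⟩ | ⟨-, Δ', -, rfl⟩
      · exact initRepl hE _
      · exact cast (Multiset.add_cons ..).symm (.init A _)
  | weak A _ ih =>
      intro Δ heq; exact .weak A (ih Δ heq)
  | botL Γ A =>
      intro Δ heq
      rcases Multiset.cons_eq_cons.mp heq with ⟨hPE, -⟩ | ⟨-, Δ', -, rfl⟩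
      · rcases hE with ⟨A', C', rfl, -⟩ | ⟨rfl, -⟩ <;> exact absurd hPE (by simp)
      · exact cast (Multiset.add_cons ..).symm (.botL _ A)
  | @andL G A B C h ih =>
      intro Δ heq
      rcases Multiset.cons_eq_cons.mp heq with ⟨hPE, rfl⟩ | ⟨-, Δ', hΓ, rfl⟩
      · rcases hE with ⟨A', C', rfl, rfl⟩ | ⟨rfl, -⟩
        · injection hPE with h1 h2; subst h1; subst h2
          exact cast (pair_add ..).symm h
        · exact absurd hPE (by simp)
      · refine cast (Multiset.add_cons ..).symm (.andL ?_)
        have h' := ih (A ::ₘ B ::ₘ Δ') (by rw [hΓ]; exact (rot3 ..).symm)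
        exact cast (by rw [Multiset.add_cons, Multiset.add_cons]) h'
  | andR _ _ ih1 ih2 =>
      intro Δ heq; exact .andR (ih1 Δ heq) (ih2 Δ heq)
  | iveeL _ _ ih1 ih2 =>
      intro Δ heq
      rcases Multiset.cons_eq_cons.mp heq with ⟨hPE, -⟩ | ⟨-, Δ', hΓ, rfl⟩
      · rcases hE with ⟨A', C', rfl, -⟩ | ⟨rfl, -⟩ <;> exact absurd hPE (by simp)
      · refine cast (Multiset.add_cons ..).symm (.iveeL ?_ ?_)
        · exact cast (Multiset.add_cons ..)
            (ih1 _ (by rw [hΓ]; exact (swap12 ..).symm))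
        · exact cast (Multiset.add_cons ..)
            (ih2 _ (by rw [hΓ]; exact (swap12 ..).symm))
  | iveeR1 _ ih => intro Δ heq; exact .iveeR1 (ih Δ heq)
  | iveeR2 _ ih => intro Δ heq; exact .iveeR2 (ih Δ heq)
  | cveeL _ _ ih1 ih2 =>
      intro Δ heq
      rcases Multiset.cons_eq_cons.mp heq with ⟨hPE, -⟩ | ⟨-, Δ', hΓ, rfl⟩
      · rcases hE with ⟨A', C', rfl, -⟩ | ⟨rfl, -⟩ <;> exact absurd hPE (by simp)
      · refine cast (Multiset.add_cons ..).symm (.cveeL ?_ ?_)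
        · exact cast (Multiset.add_cons ..)
            (ih1 _ (by rw [hΓ]; exact (swap12 ..).symm))
        · exact cast (Multiset.add_cons ..)
            (ih2 _ (by rw [hΓ]; exact (swap12 ..).symm))
  | @cveeR G A B _ ih =>
      intro Δ heq
      have h' := ih (Formula.neg A ::ₘ Formula.neg B ::ₘ Δ)
        (by rw [heq]; exact (rot3 ..).symm)
      exact .cveeR (cast (by rw [Multiset.add_cons, Multiset.add_cons]) h')
  | iimpL _ _ ih1 ih2 =>
      intro Δ heq
      rcases Multiset.cons_eq_cons.mp heq with ⟨hPE, -⟩ | ⟨-, Δ', hΓ, rfl⟩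
      · rcases hE with ⟨A', C', rfl, -⟩ | ⟨rfl, -⟩ <;> exact absurd hPE (by simp)
      · refine cast (Multiset.add_cons ..).symm (.iimpL ?_ ?_)
        · exact cast (Multiset.add_cons ..)
            (ih1 _ (by rw [hΓ]; exact (swap12 ..).symm))
        · exact cast (Multiset.add_cons ..)
            (ih2 _ (by rw [hΓ]; exact (swap12 ..).symm))
  | iimpR _ ih =>
      intro Δ heq
      refine .iimpR (cast (Multiset.add_cons ..) ?_)
      exact ih _ (by rw [heq]; exact (swap12 ..).symm)
  | cimpL _ _ ih1 ih2 =>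
      intro Δ heq
      rcases Multiset.cons_eq_cons.mp heq with ⟨hPE, -⟩ | ⟨-, Δ', hΓ, rfl⟩
      · rcases hE with ⟨A', C', rfl, -⟩ | ⟨rfl, -⟩ <;> exact absurd hPE (by simp)
      · refine cast (Multiset.add_cons ..).symm (.cimpL ?_ ?_)
        · exact cast (Multiset.add_cons ..)
            (ih1 _ (by rw [hΓ]; exact (swap12 ..).symm))
        · exact cast (Multiset.add_cons ..)
            (ih2 _ (by rw [hΓ]; exact (swap12 ..).symm))
  | @cimpR G A B _ ih =>
      intro Δ heq
      have h' := ih (A ::ₘ Formula.neg B ::ₘ Δ)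
        (by rw [heq]; exact (rot3 ..).symm)
      exact .cimpR (cast (by rw [Multiset.add_cons, Multiset.add_cons]) h')
  | negL _ ih =>
      intro Δ heq
      rcases Multiset.cons_eq_cons.mp heq with ⟨hPE, rfl⟩ | ⟨-, Δ', hΓ, rfl⟩
      · rcases hE with ⟨A', C', rfl, -⟩ | ⟨rfl, rfl⟩
        · exact absurd hPE (by simp)
        · injection hPE with h1; subst h1; exact ih _ heq
      · refine cast (Multiset.add_cons ..).symm (.negL ?_)
        exact cast (Multiset.add_cons ..)
          (ih _ (by rw [hΓ]; exact (swap12 ..).symm))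
  | negR _ ih =>
      intro Δ heq
      refine .negR (cast (Multiset.add_cons ..) ?_)
      exact ih _ (by rw [heq]; exact (swap12 ..).symm)
  | Lc _ ih =>
      intro Δ heq
      rcases Multiset.cons_eq_cons.mp heq with ⟨hPE, -⟩ | ⟨-, Δ', hΓ, rfl⟩
      · rcases hE with ⟨A', C', rfl, -⟩ | ⟨rfl, -⟩ <;> exact absurd hPE (by simp)
      · refine cast (Multiset.add_cons ..).symm (.Lc ?_)
        exact cast (Multiset.add_cons ..)
          (ih _ (by rw [hΓ]; exact (swap12 ..).symm))
  | Rc _ ih =>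
      intro Δ heq
      refine .Rc (cast (Multiset.add_cons ..) ?_)
      exact ih _ (by rw [heq]; exact (swap12 ..).symm)
  | @allL G A C x y _ ih =>
      intro Δ heq
      rcases Multiset.cons_eq_cons.mp heq with ⟨hPE, -⟩ | ⟨-, Δ', hΓ, rfl⟩
      · rcases hE with ⟨A', C', rfl, -⟩ | ⟨rfl, -⟩ <;> exact absurd hPE (by simp)
      · refine cast (Multiset.add_cons ..).symm (.allL y ?_)
        have h' := ih (Formula.subst y x A ::ₘ Formula.all x A ::ₘ Δ')
          (by rw [hΓ]; exact (rot3 ..).symm)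
        exact cast (by rw [Multiset.add_cons, Multiset.add_cons]) h'
  | allR y hfresh _ ih =>
      intro Δ heq
      refine .allR y ⟨freshRepl hE (heq ▸ hfresh.1), hfresh.2⟩ (ih Δ heq)
  | iexL y hfresh _ ih =>
      intro Δ heq
      rcases Multiset.cons_eq_cons.mp heq with ⟨hPE, -⟩ | ⟨-, Δ', hΓ, rfl⟩
      · rcases hE with ⟨A', C', rfl, -⟩ | ⟨rfl, -⟩ <;> exact absurd hPE (by simp)
      · refine cast (Multiset.add_cons ..).symm
          (.iexL y ⟨freshRepl hE (hΓ ▸ hfresh.1), hfresh.2.1, hfresh.2.2⟩ ?_)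
        exact cast (Multiset.add_cons ..)
          (ih _ (by rw [hΓ]; exact (swap12 ..).symm))
  | iexR y _ ih => intro Δ heq; exact .iexR y (ih Δ heq)
  | cexL y hfresh _ ih =>
      intro Δ heq
      rcases Multiset.cons_eq_cons.mp heq with ⟨hPE, -⟩ | ⟨-, Δ', hΓ, rfl⟩
      · rcases hE with ⟨A', C', rfl, -⟩ | ⟨rfl, -⟩ <;> exact absurd hPE (by simp)
      · refine cast (Multiset.add_cons ..).symm
          (.cexL y ⟨freshRepl hE (hΓ ▸ hfresh.1), hfresh.2⟩ ?_)
        exact cast (Multiset.add_cons ..)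
          (ih _ (by rw [hΓ]; exact (swap12 ..).symm))
  | cexR _ ih =>
      intro Δ heq
      refine .cexR (cast (Multiset.add_cons ..) ?_)
      exact ih _ (by rw [heq]; exact (swap12 ..).symm)

end LEciAux

namespace LEciAux

lemma noBot {Γ : Multiset Formula} {B : Formula} (h : LEci Γ B) :
    Γ = 0 → B = .bot → False := by
  induction h <;> intro h1 h2 <;> simp_all

lemma iimpInv {G : Multiset Formula} {F C B : Formula} (h : LEci G F) :
    G = 0 → F = .iimp C B → LEci (C ::ₘ (0 : Multiset Formula)) B := by
  induction h <;> intro h1 h2 <;> simp_all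
  all_goals exact (noBot (by assumption) rfl rfl).elim

lemma toConj : ∀ (Γ : List Formula) (Δ : Multiset Formula) (B : Formula),
    LEci (↑Γ + Δ) B → LEci (conjList Γ ::ₘ Δ) B
  | [], Δ, B, h => by
      show LEci (Formula.neg .bot ::ₘ Δ) B
      exact weakNB (by simpa using h)
  | [A], Δ, B, h => by simpa [conjList] using h
  | A :: A' :: Γ, Δ, B, h => by
      show LEci (Formula.conj A (conjList (A' :: Γ)) ::ₘ Δ) B
      refine .andL (cast (swap12 ..) ?_)
      refine toConj (A' :: Γ) (A ::ₘ Δ) B (cast ?_ h)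
      simp only [← Multiset.cons_coe, Multiset.cons_add, Multiset.add_cons]
      try rw [Multiset.cons_swap]

lemma fromConj : ∀ (Γ : List Formula) (Δ : Multiset Formula) (B : Formula),
    LEci (conjList Γ ::ₘ Δ) B → LEci (↑Γ + Δ) B
  | [], Δ, B, h => by
      have h1 := inv (Or.inr ⟨rfl, rfl⟩) h Δ rfl
      simpa using h1
  | [A], Δ, B, h => by simpa [conjList] using h
  | A :: A' :: Γ, Δ, B, h => by
      have h1 := inv (E := .conj A (conjList (A' :: Γ)))
        (rE := {A, conjList (A' :: Γ)}) (Or.inl ⟨_, _, rfl, rfl⟩) h Δ rfl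
      rw [pair_add] at h1
      have h2 := fromConj (A' :: Γ) (A ::ₘ Δ) B (cast (swap12 ..) h1)
      refine cast ?_ h2
      simp only [← Multiset.cons_coe, Multiset.cons_add, Multiset.add_cons]
      try rw [Multiset.cons_swap]

end LEciAux


/-- Ecumenical consequence is intrinsically intuitionistic: for
every finite multiset `Γ` of Ecumenical formulas (given by a list) and every
formula `B`, the sequent `Γ ⇒ B` is provable in LEci iff `(∧Γ) →_i B` is
provable in LEci. -/
theorem stmt_8 (Γ : List Formula) (B : Formula) :
    LEci (↑Γ : Multiset Formula) B ↔ Provable (.iimp (conjList Γ) B) := by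
  constructor
  · intro h
    exact .iimpR (LEciAux.toConj Γ 0 B (by simpa using h))
  · intro h
    have h' := LEciAux.iimpInv h rfl rfl
    have := LEciAux.fromConj Γ 0 B h'
    simpa using this
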